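/- For a non-degenerate probability measure ν on ℝ with support bounded from above, the map θ ↦ k_ν(θ) = (M_ν(θ) − 1)/(θ M_ν(θ)), where M_ν(θ) = ∫ 1/(1−θx) dν(x), is strictly increasing on (0, θ₊). -/

import Mathlib

open MeasureTheory Set Filter Topology ENNReal

noncomputable section

/-- Cauchy-Stieltjes moment-type transform `M_ν(θ) = ∫ 1/(1-θx) dν(x)`. -/
def Mcs (ν : Measure ℝ) (θ : ℝ) : ℝ := ∫ x, 1 / (1 - θ * x) ∂ν

/-- The mean map `k_ν(θ) = (M_ν(θ) - 1)/(θ M_ν(θ))`. -/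
def kcs (ν : Measure ℝ) (θ : ℝ) : ℝ := (Mcs ν θ - 1) / (θ * Mcs ν θ)

/-- The Cauchy transform `G_ν(z) = ∫ 1/(z-x) dν(x)`. -/
def Gcs (ν : Measure ℝ) (z : ℝ) : ℝ := ∫ x, 1 / (z - x) ∂ν

/-- `Ψ_ν(z) = ∫ zx/(1-zx) dν(x)`. -/
def PsiT (ν : Measure ℝ) (z : ℝ) : ℝ := ∫ x, z * x / (1 - z * x) ∂ν

/-- Topological support of a measure on ℝ. -/
def msupp (ν : Measure ℝ) : Set ℝ := {x | ∀ U ∈ 𝓝 x, ν U ≠ 0}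

/-- The natural parameter domain `(θ₋, θ₊) \ {0}`: nonzero `θ` with `θ x < 1` on the support. -/
def ΘDom (ν : Measure ℝ) : Set ℝ := {θ | θ ≠ 0 ∧ ∀ x ∈ msupp ν, θ * x < 1}

/-- Right-sided parameter domain `(0, θ₊)`. -/
def ΘPlus (ν : Measure ℝ) : Set ℝ := {θ | 0 < θ ∧ ∀ x ∈ msupp ν, θ * x < 1}

/-- `ψ_ν`, the inverse of the mean map `k_ν` on the parameter domain. -/
def ψcs (ν : Measure ℝ) : ℝ → ℝ := Function.invFunOn (kcs ν) (ΘDom ν)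

/-- `ψ_ν` for the right-sided family. -/
def ψplus (ν : Measure ℝ) : ℝ → ℝ := Function.invFunOn (kcs ν) (ΘPlus ν)

/-- `ψ_ν` for the left-sided family (measures on `[0,∞)`, parameter `θ < 0`). -/
def ψminus (ν : Measure ℝ) : ℝ → ℝ := Function.invFunOn (kcs ν) (Iio 0)

/-- The pseudo-variance function `𝕍_ν(m) = m (1/ψ_ν(m) - m)`. -/
def pseudoVar (ν : Measure ℝ) (m : ℝ) : ℝ := m * (1 / ψcs ν m - m)

def pseudoVarMinus (ν : Measure ℝ) (m : ℝ) : ℝ := m * (1 / ψminus ν m - m)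

/-- The tilted measure `P_{θ,ν}(dx) = ν(dx)/(M_ν(θ)(1-θx))`. -/
def tilt (ν : Measure ℝ) (θ : ℝ) : Measure ℝ :=
  ν.withDensity (fun x => ENNReal.ofReal (1 / (Mcs ν θ * (1 - θ * x))))

/-- `Q_{m,ν}`, the element of the CSK family with mean `m`. -/
def Qcsk (ν : Measure ℝ) (m : ℝ) : Measure ℝ := tilt ν (ψcs ν m)

def QcskMinus (ν : Measure ℝ) (m : ℝ) : Measure ℝ := tilt ν (ψminus ν m)

/-- The variance function `V_ν(m) = ∫ (x-m)² dQ_{m,ν}(x)`. -/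
def varFun (ν : Measure ℝ) (m : ℝ) : ℝ := ∫ x, (x - m) ^ 2 ∂(Qcsk ν m)

def varFunMinus (ν : Measure ℝ) (m : ℝ) : ℝ := ∫ x, (x - m) ^ 2 ∂(QcskMinus ν m)

/-- Domain of means (two-sided). -/
def meanDom (ν : Measure ℝ) : Set ℝ := kcs ν '' ΘDom ν

/-- Right-sided domain of means `(m₀(ν), m₊(ν))`. -/
def meanDomPlus (ν : Measure ℝ) : Set ℝ := kcs ν '' ΘPlus ν

/-- Left-sided domain of means `(m₋(ν), m₀(ν))`. -/
def meanDomMinus (ν : Measure ℝ) : Set ℝ := kcs ν '' Iio 0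

/-- `χ_ν`, the inverse of `Ψ_ν` on negative reals. -/
def χT (ν : Measure ℝ) : ℝ → ℝ := Function.invFunOn (PsiT ν) (Iio 0)

/-- The S-transform `S_ν(z) = χ_ν(z)(1+z)/z`. -/
def Stransf (ν : Measure ℝ) (z : ℝ) : ℝ := χT ν z * (1 + z) / z

/-- `m₋(ν) = -1/G_ν(0)` for a measure on `[0,∞)`. -/
def mMinus (ν : Measure ℝ) : ℝ := -(Gcs ν 0)⁻¹

/-- The self-energy (K-transform) `K_ν(z) = z - 1/G_ν(z)`. -/
def KT (ν : Measure ℝ) (z : ℝ) : ℝ := z - 1 / Gcs ν z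

/-- A measure is non-degenerate if it is not a Dirac mass. -/
def Nondeg (ν : Measure ℝ) : Prop := ∀ c : ℝ, ν ≠ Measure.dirac c
def pseudoVarPlus (ν : Measure ℝ) (m : ℝ) : ℝ := m * (1 / ψplus ν m - m)

def QcskPlus (ν : Measure ℝ) (m : ℝ) : Measure ℝ := tilt ν (ψplus ν m)

def varFunPlus (ν : Measure ℝ) (m : ℝ) : ℝ := ∫ x, (x - m) ^ 2 ∂(QcskPlus ν m)

/-- The mean of a measure on `[0,∞)`, as an extended nonnegative real. -/
def m0E (ν : Measure ℝ) : ℝ≥0∞ := ∫⁻ x, ENNReal.ofReal x ∂ν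

/-- The Σ-transform `Σ_ν(z) = S_ν(z/(1-z))`. -/
def SigmaT (ν : Measure ℝ) (z : ℝ) : ℝ := Stransf ν (z / (1 - z))

/-- The free Poisson (Marchenko–Pastur) law with density `(1/2π)√((4-x)/x)` on `(0,4)`. -/
def freePoisson : Measure ℝ :=
  volume.withDensity (fun x => ENNReal.ofReal
    (Set.indicator (Ioo 0 4) (fun y => (1/(2*Real.pi)) * Real.sqrt ((4 - y)/y)) x))


/-- Auxiliary: the support `msupp ν` is closed. -/
lemma msupp_isClosed (ν : Measure ℝ) : IsClosed (msupp ν) := by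
  rw [← isOpen_compl_iff]
  refine isOpen_iff_mem_nhds.2 fun x hx => ?_
  simp only [msupp, mem_compl_iff, mem_setOf_eq, not_forall] at hx
  obtain ⟨U, hU, hU0⟩ := hx
  rw [not_not] at hU0
  refine mem_of_superset (interior_mem_nhds.2 hU) fun y hy => ?_
  simp only [mem_compl_iff, msupp, mem_setOf_eq, not_forall]
  exact ⟨interior U, isOpen_interior.mem_nhds hy,
    not_not.2 (measure_mono_null interior_subset hU0)⟩

/-- Auxiliary: the complement of the support is null. -/
lemma measure_compl_msupp (ν : Measure ℝ) : ν (msupp ν)ᶜ = 0 := by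
  refine measure_null_of_locally_null _ fun x hx => ?_
  simp only [msupp, mem_compl_iff, mem_setOf_eq, not_forall] at hx
  obtain ⟨U, hU, hU0⟩ := hx
  rw [not_not] at hU0
  exact ⟨U, mem_nhdsWithin_of_mem_nhds hU, hU0⟩

/-- Auxiliary: a probability measure giving no mass to `{x}ᶜ` is `dirac x`. -/
lemma eq_dirac_of_compl_singleton_null (ν : Measure ℝ) [IsProbabilityMeasure ν]
    {x : ℝ} (h : ν ({x}ᶜ) = 0) : ν = Measure.dirac x := by
  ext s hs
  rw [Measure.dirac_apply' _ hs]
  by_cases hxs : x ∈ s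
  · have h1 : ν sᶜ = 0 := measure_mono_null (fun y hy => fun (hy' : y = x) => hy (hy' ▸ hxs)) h
    have := measure_add_measure_compl (μ := ν) hs
    rw [h1, add_zero] at this
    rw [this, measure_univ, indicator_of_mem hxs]; rfl
  · have : ν s = 0 := measure_mono_null (fun y hy => fun (hy' : y = x) => hxs (hy' ▸ hy)) h
    rw [this, indicator_of_notMem hxs]

set_option maxHeartbeats 1000000 in
/-- the mean map `k_ν` is strictly increasing on `(0, θ₊)`. -/
theorem mean_map_strictMonoOn (ν : Measure ℝ) [IsProbabilityMeasure ν]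
    (hnd : Nondeg ν) (hbd : BddAbove (msupp ν)) :
    StrictMonoOn (kcs ν) (ΘPlus ν) := by
  intro θ₁ h₁ θ₂ h₂ h12
  obtain ⟨hθ₁, hs₁⟩ := h₁
  obtain ⟨hθ₂, hs₂⟩ := h₂
  set S := msupp ν with hSdef
  have hScl : IsClosed S := msupp_isClosed ν
  have hSc0 : ν Sᶜ = 0 := measure_compl_msupp ν
  have hSae : S ∈ ae ν := mem_ae_iff.2 hSc0
  have hSne : S.Nonempty := by
    by_contra h
    rw [not_nonempty_iff_eq_empty] at h
    rw [h, compl_empty, measure_univ] at hSc0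
    exact one_ne_zero hSc0
  set A := sSup S with hAdef
  have hAS : A ∈ S := hScl.csSup_mem hSne hbd
  have hle : ∀ x ∈ S, x ≤ A := fun x hx => le_csSup hbd hx
  set z₁ := θ₁⁻¹ with hz₁def
  set z₂ := θ₂⁻¹ with hz₂def
  have hz₁pos : 0 < z₁ := inv_pos.2 hθ₁
  have hz₂pos : 0 < z₂ := inv_pos.2 hθ₂
  have hz21 : z₂ < z₁ := inv_strictAnti₀ hθ₁ h12
  have hθz₁ : θ₁ * z₁ = 1 := mul_inv_cancel₀ (ne_of_gt hθ₁)
  have hθz₂ : θ₂ * z₂ = 1 := mul_inv_cancel₀ (ne_of_gt hθ₂)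
  have hAz₂ : A < z₂ := by
    have h2 := hs₂ A hAS
    nlinarith
  have hAz₁ : A < z₁ := hAz₂.trans hz21
  set f : ℝ → ℝ := fun x => (z₁ - min x A)⁻¹ with hfdef
  set g : ℝ → ℝ := fun x => (z₂ - min x A)⁻¹ with hgdef
  have hden₁ : ∀ x : ℝ, 0 < z₁ - min x A := fun x => by
    have := min_le_right x A; linarith
  have hden₂ : ∀ x : ℝ, 0 < z₂ - min x A := fun x => by
    have := min_le_right x A; linarith
  have hfpos : ∀ x, 0 < f x := fun x => inv_pos.2 (hden₁ x)
  have hgpos : ∀ x, 0 < g x := fun x => inv_pos.2 (hden₂ x)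
  have hfbd : ∀ x, f x ≤ (z₁ - A)⁻¹ := fun x => by
    refine inv_anti₀ (by linarith) ?_
    have := min_le_right x A; linarith
  have hgbd : ∀ x, g x ≤ (z₂ - A)⁻¹ := fun x => by
    refine inv_anti₀ (by linarith) ?_
    have := min_le_right x A; linarith
  have hfmono : Monotone f := by
    intro x y hxy
    have h1 : min x A ≤ min y A := min_le_min hxy le_rfl
    exact inv_anti₀ (hden₁ y) (by linarith)
  have hgmono : Monotone g := by
    intro x y hxy
    have h1 : min x A ≤ min y A := min_le_min hxy le_rfl
    exact inv_anti₀ (hden₂ y) (by linarith)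
  have hfc : Continuous f :=
    (continuous_const.sub (continuous_id.min continuous_const)).inv₀
      fun x => ne_of_gt (hden₁ x)
  have hgc : Continuous g :=
    (continuous_const.sub (continuous_id.min continuous_const)).inv₀
      fun x => ne_of_gt (hden₂ x)
  -- integrability of bounded continuous functions
  have hbdint : ∀ (h : ℝ → ℝ) (C : ℝ), Continuous h → (∀ x, |h x| ≤ C) → Integrable h ν := by
    intro h C hc hb
    exact (integrable_const C).mono' hc.aestronglyMeasurable (ae_of_all _ fun x => by
      rw [Real.norm_eq_abs]; exact hb x)
  have hfint : Integrable f ν := hbdint f ((z₁ - A)⁻¹) hfc fun x => by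
    rw [abs_of_pos (hfpos x)]; exact hfbd x
  have hgint : Integrable g ν := hbdint g ((z₂ - A)⁻¹) hgc fun x => by
    rw [abs_of_pos (hgpos x)]; exact hgbd x
  have hfgint : Integrable (fun x => f x * g x) ν :=
    hbdint _ ((z₁ - A)⁻¹ * (z₂ - A)⁻¹) (hfc.mul hgc) fun x => by
      rw [abs_mul, abs_of_pos (hfpos x), abs_of_pos (hgpos x)]
      exact mul_le_mul (hfbd x) (hgbd x) (le_of_lt (hgpos x))
        (le_of_lt (inv_pos.2 (by linarith)))
  set G₁ := ∫ x, f x ∂ν with hG₁def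
  set G₂ := ∫ x, g x ∂ν with hG₂def
  set I := ∫ x, f x * g x ∂ν with hIdef
  have hG₁pos : 0 < G₁ := by
    rw [hG₁def, integral_pos_iff_support_of_nonneg (fun x => le_of_lt (hfpos x)) hfint]
    have : Function.support f = univ := eq_univ_of_forall fun x => ne_of_gt (hfpos x)
    rw [this, measure_univ]; exact one_pos
  have hG₂pos : 0 < G₂ := by
    rw [hG₂def, integral_pos_iff_support_of_nonneg (fun x => le_of_lt (hgpos x)) hgint]
    have : Function.support g = univ := eq_univ_of_forall fun x => ne_of_gt (hgpos x)
    rw [this, measure_univ]; exact one_pos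
  -- the FKG / Chebyshev correlation inequality, strict version
  set H : ℝ × ℝ → ℝ := fun p => (f p.1 - f p.2) * (g p.1 - g p.2) with hHdef
  have hHc : Continuous H :=
    ((hfc.comp continuous_fst).sub (hfc.comp continuous_snd)).mul
      ((hgc.comp continuous_fst).sub (hgc.comp continuous_snd))
  have hHnn : ∀ p, 0 ≤ H p := by
    intro p
    simp only [hHdef]
    rcases le_total p.1 p.2 with h | h
    · nlinarith [mul_nonneg (sub_nonneg.2 (hfmono h)) (sub_nonneg.2 (hgmono h))]
    · nlinarith [mul_nonneg (sub_nonneg.2 (hfmono h)) (sub_nonneg.2 (hgmono h))]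
  have hHint : Integrable H (ν.prod ν) := by
    refine (integrable_const ((z₁ - A)⁻¹ * (z₂ - A)⁻¹)).mono'
      hHc.aestronglyMeasurable (ae_of_all _ fun p => ?_)
    rw [Real.norm_eq_abs, abs_mul]
    refine mul_le_mul ?_ ?_ (abs_nonneg _) (le_of_lt (inv_pos.2 (by linarith)))
    · rw [abs_sub_le_iff]
      constructor <;> nlinarith [hfbd p.1, hfbd p.2, hfpos p.1, hfpos p.2]
    · rw [abs_sub_le_iff]
      constructor <;> nlinarith [hgbd p.1, hgbd p.2, hgpos p.1, hgpos p.2]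
  -- ∫ H = 2 (I - G₁ G₂)
  have hHval : ∫ p, H p ∂(ν.prod ν) = 2 * (I - G₁ * G₂) := by
    rw [integral_prod _ hHint]
    have hinner : ∀ x : ℝ, (∫ y, H (x, y) ∂ν) = f x * g x - f x * G₂ - g x * G₁ + I := by
      intro x
      have e1 : (fun y => H (x, y)) =
          fun y => (f x * g x - f x * g y - g x * f y) + f y * g y := by
        funext y; simp only [hHdef]; ring
      have ia : Integrable (fun y => f x * g y) ν := hgint.const_mul _
      have ib : Integrable (fun y => g x * f y) ν := hfint.const_mul _
      have ic : Integrable (fun y => f x * g x - f x * g y) ν := (integrable_const _).sub ia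
      have id' : Integrable (fun y => f x * g x - f x * g y - g x * f y) ν := ic.sub ib
      calc (∫ y, H (x, y) ∂ν)
          = ∫ y, ((f x * g x - f x * g y - g x * f y) + f y * g y) ∂ν := by rw [← e1]
        _ = (∫ y, (f x * g x - f x * g y - g x * f y) ∂ν) + I := integral_add id' hfgint
        _ = ((∫ y, (f x * g x - f x * g y) ∂ν) - ∫ y, g x * f y ∂ν) + I := by
            rw [integral_sub ic ib]
        _ = (((∫ (_ : ℝ), (f x * g x) ∂ν) - ∫ y, f x * g y ∂ν) - ∫ y, g x * f y ∂ν) + I := by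
            rw [integral_sub (integrable_const _) ia]
        _ = f x * g x - f x * G₂ - g x * G₁ + I := by
            rw [integral_const, integral_const_mul, integral_const_mul]
            simp [measure_univ]; rfl
    have ia : Integrable (fun x => f x * G₂) ν := hfint.mul_const _
    have ib : Integrable (fun x => g x * G₁) ν := hgint.mul_const _
    have ic : Integrable (fun x => f x * g x - f x * G₂) ν := hfgint.sub ia
    have id' : Integrable (fun x => f x * g x - f x * G₂ - g x * G₁) ν := ic.sub ib
    have e2 : (fun x => ∫ y, H (x, y) ∂ν) =
        fun x => ((f x * g x - f x * G₂ - g x * G₁) + I) := by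
      funext x; rw [hinner x]
    calc (∫ x, ∫ y, H (x, y) ∂ν ∂ν)
        = ∫ x, ((f x * g x - f x * G₂ - g x * G₁) + I) ∂ν := by rw [e2]
      _ = (∫ x, (f x * g x - f x * G₂ - g x * G₁) ∂ν) + I := by
          rw [integral_add id' (integrable_const _)]
          simp [measure_univ]
      _ = ((∫ x, (f x * g x - f x * G₂) ∂ν) - ∫ x, g x * G₁ ∂ν) + I := by
          rw [integral_sub ic ib]
      _ = (((∫ x, f x * g x ∂ν) - ∫ x, f x * G₂ ∂ν) - ∫ x, g x * G₁ ∂ν) + I := by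
          rw [integral_sub hfgint ia]
      _ = 2 * (I - G₁ * G₂) := by
          rw [integral_mul_const, integral_mul_const, ← hIdef, ← hG₁def, ← hG₂def]
          ring
  -- positivity of ∫ H
  have hD : ((S ×ˢ S) \ {p : ℝ × ℝ | p.1 = p.2}) ⊆ Function.support H := by
    rintro ⟨x, y⟩ ⟨⟨hxS, hyS⟩, hne⟩
    simp only [mem_setOf_eq] at hne
    have hxA : min x A = x := min_eq_left (hle x hxS)
    have hyA : min y A = y := min_eq_left (hle y hyS)
    simp only [Function.mem_support, hHdef]
    rcases lt_or_gt_of_ne hne with h | h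
    · have hf' : f x < f y := by
        simp only [hfdef, hxA, hyA]
        exact inv_strictAnti₀ (by linarith [hle y hyS]) (by linarith)
      have hg' : g x < g y := by
        simp only [hgdef, hxA, hyA]
        exact inv_strictAnti₀ (by linarith [hle y hyS]) (by linarith)
      exact ne_of_gt (by nlinarith)
    · have hf' : f y < f x := by
        simp only [hfdef, hxA, hyA]
        exact inv_strictAnti₀ (by linarith [hle x hxS]) (by linarith)
      have hg' : g y < g x := by
        simp only [hgdef, hxA, hyA]
        exact inv_strictAnti₀ (by linarith [hle x hxS]) (by linarith)
      exact ne_of_gt (by nlinarith)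
  have hDpos : 0 < (ν.prod ν) ((S ×ˢ S) \ {p : ℝ × ℝ | p.1 = p.2}) := by
    rw [pos_iff_ne_zero]
    intro h0
    have hcov : {p : ℝ × ℝ | p.1 ≠ p.2} ⊆
        ((S ×ˢ S) \ {p : ℝ × ℝ | p.1 = p.2}) ∪ (Sᶜ ×ˢ univ) ∪ (univ ×ˢ Sᶜ) := by
      rintro ⟨x, y⟩ hxy
      by_cases hx : x ∈ S
      · by_cases hy : y ∈ S
        · exact Or.inl (Or.inl ⟨⟨hx, hy⟩, hxy⟩)
        · exact Or.inr ⟨mem_univ _, hy⟩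
      · exact Or.inl (Or.inr ⟨hx, mem_univ _⟩)
    have hnull : (ν.prod ν) {p : ℝ × ℝ | p.1 ≠ p.2} = 0 := by
      refine measure_mono_null hcov ?_
      refine measure_union_null (measure_union_null h0 ?_) ?_
      · rw [Measure.prod_prod, hSc0, zero_mul]
      · rw [Measure.prod_prod, hSc0, mul_zero]
    have hmeas : MeasurableSet {p : ℝ × ℝ | p.1 ≠ p.2} :=
      (isClosed_diagonal.measurableSet).compl
    rw [Measure.measure_prod_null hmeas] at hnull
    have hne : (ae ν).NeBot := IsProbabilityMeasure.ae_neBot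
    obtain ⟨x, hx⟩ := hnull.exists
    simp only [Pi.zero_apply] at hx
    have hx' : ν ({x}ᶜ) = 0 := by
      refine measure_mono_null (fun y (hy : y ≠ x) => ?_) hx
      exact Ne.symm hy
    exact hnd x (eq_dirac_of_compl_singleton_null ν hx')
  have hHpos : 0 < ∫ p, H p ∂(ν.prod ν) := by
    rw [integral_pos_iff_support_of_nonneg hHnn hHint]
    exact lt_of_lt_of_le hDpos (measure_mono hD)
  have hI : G₁ * G₂ < I := by nlinarith [hHval ▸ hHpos]
  -- the resolvent identity: G₂ - G₁ = (z₁ - z₂) I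
  have hres : G₂ - G₁ = (z₁ - z₂) * I := by
    have hpt : ∀ x, g x - f x = (z₁ - z₂) * (f x * g x) := by
      intro x
      have h1 := hden₁ x
      have h2 := hden₂ x
      simp only [hfdef, hgdef]
      rw [inv_sub_inv (ne_of_gt h2) (ne_of_gt h1), div_eq_mul_inv, mul_inv]
      ring
    rw [hG₂def, hG₁def, hIdef, ← integral_sub hgint hfint, ← integral_const_mul]
    exact integral_congr_ae (ae_of_all _ hpt)
  -- express Mcs in terms of G
  have hM : ∀ (θ z : ℝ), 0 < θ → θ⁻¹ = z → A < z →
      Mcs ν θ = z * ∫ x, (z - min x A)⁻¹ ∂ν := by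
    intro θ z hθ hz hAz
    rw [Mcs, ← integral_const_mul]
    refine integral_congr_ae ?_
    filter_upwards [hSae] with x hx
    have hxA : min x A = x := min_eq_left (hle x hx)
    have hxz : x < z := lt_of_le_of_lt (hle x hx) hAz
    have hθz : θ * z = 1 := by rw [← hz]; exact mul_inv_cancel₀ (ne_of_gt hθ)
    rw [hxA, one_div]
    have h1 : 1 - θ * x = θ * (z - x) := by nlinarith
    rw [h1, mul_inv, ← hz]
  have hM₁ : Mcs ν θ₁ = z₁ * G₁ := hM θ₁ z₁ hθ₁ rfl hAz₁
  have hM₂ : Mcs ν θ₂ = z₂ * G₂ := hM θ₂ z₂ hθ₂ rfl hAz₂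
  -- final computation
  rw [kcs, kcs, hM₁, hM₂]
  have e₁ : θ₁ * (z₁ * G₁) = G₁ := by rw [← mul_assoc, hθz₁, one_mul]
  have e₂ : θ₂ * (z₂ * G₂) = G₂ := by rw [← mul_assoc, hθz₂, one_mul]
  rw [e₁, e₂, div_lt_div_iff₀ hG₁pos hG₂pos]
  nlinarith [mul_pos (sub_pos.2 hz21) (sub_pos.2 hI)]
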